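/- Theorem 11 (posterior FNR rate under α-control of the modified FDR): Suppose d^t ≠ (1,…,1), and let d̂_n ∈ {0,1}^m be decision configurations such that for all sufficiently large n: d̂_{n,i} = 1 for every i with d_i^t = 1, and Σ_{i=1}^m (1 − d̂_{n,i}) ≥ 1. Suppose for each i with d_i^t = 0 there is a constant H̃_i > 0 such that (1/n)·log v_{in} → −H̃_i as n → ∞. Then limsup_{n→∞} (1/n)·log[ (Σ_{i=1}^m (1 − d̂_{n,i}) v_{in}) / (Σ_{i=1}^m (1 − d̂_{n,i})) ] ≤ −min{H̃_i : d_i^t = 0}. -/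

import Mathlib

open Filter

/-- Theorem 11 (posterior FNR rate under α-control of the modified FDR). -/
theorem FNR_rate_under_alpha_control
    (m : ℕ) (hm : 1 ≤ m)
    (dt : Fin m → Bool)
    (hne : (Finset.univ.filter fun i => dt i = false).Nonempty)
    (v : ℕ → Fin m → ℝ) (hv : ∀ n i, v n i ∈ Set.Ioo (0:ℝ) 1)
    (Ht : Fin m → ℝ) (hHtpos : ∀ i, dt i = false → 0 < Ht i)
    (hHt : ∀ i, dt i = false →
      Tendsto (fun n : ℕ => Real.log (v n i) / n) atTop (nhds (-(Ht i))))
    (dhat : ℕ → Fin m → Bool)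
    (hd1 : ∀ᶠ n in atTop, ∀ i, dt i = true → dhat n i = true)
    (hd2 : ∀ᶠ n in atTop, ∃ i, dhat n i = false) :
    Filter.limsup (fun n : ℕ =>
        Real.log ((∑ i, if dhat n i then 0 else v n i) /
          (∑ i, if dhat n i then 0 else (1:ℝ))) / n) Filter.atTop
      ≤ -((Finset.univ.filter fun i => dt i = false).inf' hne Ht) := by
  classical
  set S := (Finset.univ.filter fun i => dt i = false) with hS
  set f : ℕ → ℝ := fun n =>
    Real.log ((∑ i, if dhat n i then 0 else v n i) /
      (∑ i, if dhat n i then 0 else (1:ℝ))) / n with hf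
  set g : ℕ → ℝ := fun n =>
    Real.log S.card / n + S.sup' hne (fun i => Real.log (v n i) / n) with hg
  -- the limit of g
  have hsup_eq : S.sup' hne (fun i => -Ht i) = -(S.inf' hne Ht) := by
    apply le_antisymm
    · exact Finset.sup'_le _ _ fun i hi => neg_le_neg (Finset.inf'_le _ hi)
    · rw [neg_le]
      exact Finset.le_inf' _ _ fun i hi => by
        have := Finset.le_sup' (fun i => -Ht i) hi
        linarith
  have hgtendsto : Tendsto g atTop (nhds (-(S.inf' hne Ht))) := by
    have h1 : Tendsto (fun n : ℕ => Real.log S.card / n) atTop (nhds 0) :=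
      tendsto_const_div_atTop_nhds_zero_nat _
    have h2 : Tendsto (fun n : ℕ => S.sup' hne (fun i => Real.log (v n i) / n)) atTop
        (nhds (S.sup' hne (fun i => -Ht i))) := by
      apply Filter.Tendsto.finset_sup'_nhds_apply hne
      intro i hi
      exact hHt i (by simpa [hS] using hi)
    rw [hsup_eq] at h2
    simpa using h1.add h2
  -- eventual bound f ≤ g
  have hfg : ∀ᶠ n in atTop, f n ≤ g n := by
    filter_upwards [hd1, hd2, eventually_ge_atTop 1] with n h1 h2 hn1
    obtain ⟨i0, hi0⟩ := h2
    have hi0S : i0 ∈ S := by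
      simp only [hS, Finset.mem_filter, Finset.mem_univ, true_and]
      by_contra h
      simp only [Bool.not_eq_false] at h
      exact absurd (h1 i0 h) (by simp [hi0])
    have hnpos : (0:ℝ) < n := by exact_mod_cast hn1
    set N : ℝ := ∑ i, if dhat n i then 0 else v n i with hN
    set D : ℝ := ∑ i, if dhat n i then 0 else (1:ℝ) with hD
    have hNpos : 0 < N := by
      have : v n i0 ≤ N := by
        have := Finset.single_le_sum
          (f := fun i => if dhat n i then 0 else v n i)
          (fun i _ => by by_cases h : dhat n i = true <;> simp [h, (hv n i).1.le]) (Finset.mem_univ i0)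
        simpa [hi0] using this
      linarith [(hv n i0).1]
    have hD1 : (1:ℝ) ≤ D := by
      have := Finset.single_le_sum
        (f := fun i => if dhat n i then 0 else (1:ℝ))
        (fun i _ => by by_cases h : dhat n i = true <;> simp [h]) (Finset.mem_univ i0)
      simpa [hi0] using this
    -- N is at most card S times the sup of v over S
    have hsupvpos : 0 < S.sup' hne (v n) :=
      lt_of_lt_of_le (hv n i0).1 (Finset.le_sup' (v n) hi0S)
    have hNle : N ≤ S.card * S.sup' hne (v n) := by
      have hstep : N ≤ ∑ i ∈ S, v n i := by
        have : N ≤ ∑ i, if dt i then 0 else v n i := by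
          apply Finset.sum_le_sum
          intro i _
          by_cases hdt : dt i = true
          · simp [hdt, h1 i hdt]
          · simp only [Bool.not_eq_true] at hdt
            simp only [hdt]
            split <;> simp [(hv n i).1.le]
        calc N ≤ ∑ i, if dt i then 0 else v n i := this
          _ = ∑ i ∈ S, v n i := by
            rw [hS, Finset.sum_filter]
            apply Finset.sum_congr rfl
            intro i _
            cases h : dt i <;> simp
      calc N ≤ ∑ i ∈ S, v n i := hstep
        _ ≤ S.card • S.sup' hne (v n) :=
            Finset.sum_le_card_nsmul _ _ _ (fun i hi => Finset.le_sup' (v n) hi)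
        _ = S.card * S.sup' hne (v n) := by simp [nsmul_eq_mul]
    -- bound the log
    have hlog1 : Real.log (N / D) ≤ Real.log N := by
      rw [Real.log_div (ne_of_gt hNpos) (by linarith)]
      have : 0 ≤ Real.log D := Real.log_nonneg hD1
      linarith
    have hlog2 : Real.log N ≤ Real.log S.card + Real.log (S.sup' hne (v n)) := by
      rw [← Real.log_mul (by positivity) (ne_of_gt hsupvpos)]
      exact Real.log_le_log hNpos hNle
    have hlog3 : Real.log (S.sup' hne (v n)) ≤ S.sup' hne (fun i => Real.log (v n i)) := by
      obtain ⟨j, hj, hjeq⟩ := Finset.exists_mem_eq_sup' hne (v n)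
      rw [hjeq]
      exact Finset.le_sup' (fun i => Real.log (v n i)) hj
    have hdivsup : S.sup' hne (fun i => Real.log (v n i)) / n
        = S.sup' hne (fun i => Real.log (v n i) / n) := by
      have hmono : Monotone (fun x : ℝ => x / (n:ℝ)) := fun a b hab => by
        dsimp only
        gcongr
      exact Finset.comp_sup'_eq_sup'_comp hne (fun x : ℝ => x / (n:ℝ))
        (fun x y => hmono.map_max)
    have hnum : Real.log (N / D) ≤ Real.log S.card + S.sup' hne (fun i => Real.log (v n i)) := by
      linarith
    calc f n = Real.log (N / D) / n := rfl
      _ ≤ (Real.log S.card + S.sup' hne (fun i => Real.log (v n i))) / n := by gcongr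
      _ = Real.log S.card / n + S.sup' hne (fun i => Real.log (v n i)) / n := add_div _ _ _
      _ = g n := by rw [hdivsup]
  -- lower bound for coboundedness
  set h : ℕ → ℝ := fun n =>
    S.inf' hne (fun i => Real.log (v n i) / n) - Real.log m / n with hh
  have hhtendsto : Tendsto h atTop (nhds (S.inf' hne (fun i => -Ht i) - 0)) := by
    apply Filter.Tendsto.sub
    · exact Filter.Tendsto.finset_inf'_nhds_apply hne
        (fun i hi => hHt i (by simpa [hS] using hi))
    · exact tendsto_const_div_atTop_nhds_zero_nat _
  have hhf : ∀ᶠ n in atTop, h n ≤ f n := by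
    filter_upwards [hd1, hd2, eventually_ge_atTop 1] with n h1 h2 hn1
    obtain ⟨i0, hi0⟩ := h2
    have hi0S : i0 ∈ S := by
      simp only [hS, Finset.mem_filter, Finset.mem_univ, true_and]
      by_contra hcon
      simp only [Bool.not_eq_false] at hcon
      exact absurd (h1 i0 hcon) (by simp [hi0])
    have hnpos : (0:ℝ) < n := by exact_mod_cast hn1
    have hmpos : (0:ℝ) < m := by exact_mod_cast hm
    set N : ℝ := ∑ i, if dhat n i = true then 0 else v n i with hN
    set D : ℝ := ∑ i, if dhat n i = true then 0 else (1:ℝ) with hD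
    have hvN : v n i0 ≤ N := by
      have := Finset.single_le_sum
        (f := fun i => if dhat n i = true then 0 else v n i)
        (fun i _ => by by_cases hb : dhat n i = true <;> simp [hb, (hv n i).1.le])
        (Finset.mem_univ i0)
      simpa [hi0] using this
    have hNpos : 0 < N := lt_of_lt_of_le (hv n i0).1 hvN
    have hD1 : (1:ℝ) ≤ D := by
      have := Finset.single_le_sum
        (f := fun i => if dhat n i = true then 0 else (1:ℝ))
        (fun i _ => by by_cases hb : dhat n i = true <;> simp [hb]) (Finset.mem_univ i0)
      simpa [hi0] using this
    have hDm : D ≤ m := by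
      calc D ≤ ∑ _i : Fin m, (1:ℝ) := by
            apply Finset.sum_le_sum
            intro i _
            by_cases hb : dhat n i = true <;> simp [hb]
        _ = m := by simp
    have hdivle : v n i0 / m ≤ N / D := by
      rw [div_le_div_iff₀ hmpos (by linarith)]
      nlinarith [(hv n i0).1.le]
    have hlogle : Real.log (v n i0) - Real.log m ≤ Real.log (N / D) := by
      have := Real.log_le_log (div_pos (hv n i0).1 hmpos) hdivle
      rwa [Real.log_div (ne_of_gt (hv n i0).1) (ne_of_gt hmpos)] at this
    have hinfle : S.inf' hne (fun i => Real.log (v n i)) ≤ Real.log (v n i0) :=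
      Finset.inf'_le _ hi0S
    have hmono : Monotone (fun x : ℝ => x / (n:ℝ)) := fun a b hab => by
      dsimp only
      gcongr
    have hdivinf : S.inf' hne (fun i => Real.log (v n i)) / n
        = S.inf' hne (fun i => Real.log (v n i) / n) :=
      Finset.apply_inf'_eq_inf'_comp hne (fun x : ℝ => x / (n:ℝ)) (fun x y => hmono.map_min)
    calc h n = (S.inf' hne (fun i => Real.log (v n i)) - Real.log m) / n := by
          rw [hh]
          dsimp only
          rw [sub_div, hdivinf]
      _ ≤ Real.log (N / D) / n := by gcongr; linarith
      _ = f n := rfl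
  -- conclude
  have hgbdd : IsBoundedUnder (· ≤ ·) atTop g := hgtendsto.isBoundedUnder_le
  have hfcobdd : IsCoboundedUnder (· ≤ ·) atTop f := by
    have hev : ∀ᶠ n in atTop, S.inf' hne (fun i => -Ht i) - 0 - 1 ≤ h n :=
      hhtendsto.eventually_const_le (by linarith)
    apply Filter.isCoboundedUnder_le_of_eventually_le atTop
      (x := S.inf' hne (fun i => -Ht i) - 0 - 1)
    filter_upwards [hhf, hev] with n p1 p2
    exact p2.trans p1
  show Filter.limsup f atTop ≤ -(S.inf' hne Ht)
  calc Filter.limsup f atTop ≤ Filter.limsup g atTop :=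
        Filter.limsup_le_limsup hfg hfcobdd hgbdd
    _ = -(S.inf' hne Ht) := hgtendsto.limsup_eq
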